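/- (Carlitz's Euler-Mahonian identity) For all n ≥ 1, Σ_{k≥0} [k+1]_q^n t^k = (Σ_{π∈S_n} t^{des(π)} q^{maj(π)}) / Π_{j=0}^n (1 - t q^j), where [k+1]_q = 1 + q + ⋯ + q^k. -/

import Mathlib

open scoped Classical

/-- The descent set of a permutation of `Fin n` (position `i` records a descent
between the `(i+1)`-st and `(i+2)`-nd entries, i.e. paper descent `i+1`). -/
def desSet (n : ℕ) (π : Equiv.Perm (Fin n)) : Finset (Fin n) :=
  Finset.univ.filter (fun i => ∃ h : (i : ℕ) + 1 < n, π ⟨(i : ℕ) + 1, h⟩ < π i)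

/-- The descent number. -/
def des (n : ℕ) (π : Equiv.Perm (Fin n)) : ℕ := (desSet n π).card

/-- The major index: the sum of the (1-based) descent positions. -/
def maj (n : ℕ) (π : Equiv.Perm (Fin n)) : ℕ := ∑ i ∈ desSet n π, ((i : ℕ) + 1)

noncomputable section CarlitzAux

open Polynomial Finset

/-- descent indicator at position `l` (0-indexed). -/
def dchar (n : ℕ) (π : Equiv.Perm (Fin n)) (l : ℕ) : ℕ :=
  if h : l + 1 < n then
    (if π ⟨l + 1, h⟩ < π ⟨l, Nat.lt_of_succ_lt h⟩ then 1 else 0)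
  else 0

/-- number of descents at positions `< m`. -/
def dlt (n : ℕ) (π : Equiv.Perm (Fin n)) (m : ℕ) : ℕ := ∑ l ∈ Finset.range m, dchar n π l

/-- the comajor index. -/
def dcomaj (n : ℕ) (π : Equiv.Perm (Fin n)) : ℕ :=
  ∑ l ∈ Finset.range n, (n - 1 - l) * dchar n π l

/-- monotone `n`-tuples with entries `≤ m`. -/
def M (n m : ℕ) : Finset (Fin n → ℕ) :=
  (Fintype.piFinset fun _ => Finset.range (m + 1)).filter Monotone

/-- generating polynomial of partitions in an `n × m` box. -/
def g (n m : ℕ) : Polynomial ℚ := ∑ b ∈ M n m, X ^ (∑ i, b i)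

lemma dchar_eq_zero {n : ℕ} (π : Equiv.Perm (Fin n)) {l : ℕ} (h : ¬ l + 1 < n) :
    dchar n π l = 0 := dif_neg h

lemma des_eq (n : ℕ) (π : Equiv.Perm (Fin n)) :
    des n π = ∑ l ∈ Finset.range n, dchar n π l := by
  rw [des, desSet, Finset.card_filter, ← Fin.sum_univ_eq_sum_range (fun l => dchar n π l) n]
  refine Finset.sum_congr rfl fun j _ => ?_
  unfold dchar
  by_cases h : (j : ℕ) + 1 < n
  · rw [dif_pos h]
    by_cases h2 : π ⟨(j : ℕ) + 1, h⟩ < π ⟨(j : ℕ), Nat.lt_of_succ_lt h⟩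
    · rw [if_pos, if_pos h2]
      exact ⟨h, by simpa using h2⟩
    · rw [if_neg, if_neg h2]
      rintro ⟨h', hlt⟩
      exact h2 (by simpa using hlt)
  · rw [dif_neg h, if_neg]
    rintro ⟨h', _⟩
    exact h h'

lemma maj_eq (n : ℕ) (π : Equiv.Perm (Fin n)) :
    maj n π = ∑ l ∈ Finset.range n, (l + 1) * dchar n π l := by
  rw [maj, desSet, Finset.sum_filter, ← Fin.sum_univ_eq_sum_range (fun l => (l + 1) * dchar n π l) n]
  refine Finset.sum_congr rfl fun j _ => ?_
  unfold dchar
  by_cases h : (j : ℕ) + 1 < n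
  · rw [dif_pos h]
    by_cases h2 : π ⟨(j : ℕ) + 1, h⟩ < π ⟨(j : ℕ), Nat.lt_of_succ_lt h⟩
    · rw [if_pos, if_pos h2, mul_one]
      exact ⟨h, by simpa using h2⟩
    · rw [if_neg, if_neg h2, mul_zero]
      rintro ⟨h', hlt⟩
      exact h2 (by simpa using hlt)
  · rw [dif_neg h, if_neg, mul_zero]
    rintro ⟨h', _⟩
    exact h h'

lemma dlt_succ (n : ℕ) (π : Equiv.Perm (Fin n)) (m : ℕ) :
    dlt n π (m + 1) = dlt n π m + dchar n π m := Finset.sum_range_succ _ _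

lemma dlt_mono (n : ℕ) (π : Equiv.Perm (Fin n)) {m1 m2 : ℕ} (h : m1 ≤ m2) :
    dlt n π m1 ≤ dlt n π m2 := by
  exact Finset.sum_le_sum_of_subset (Finset.range_subset_range.2 h)

lemma dlt_le_des (n : ℕ) (π : Equiv.Perm (Fin n)) (m : ℕ) : dlt n π m ≤ des n π := by
  have h2 : ∀ l ∈ Finset.Ico n (max m n), dchar n π l = 0 := fun l hl =>
    dchar_eq_zero π (by have := (Finset.mem_Ico.1 hl).1; omega)
  calc dlt n π m ≤ dlt n π (max m n) := dlt_mono n π (le_max_left _ _)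
    _ = des n π := by
        rw [dlt, des_eq, Finset.range_eq_Ico,
          ← Finset.sum_Ico_consecutive _ (Nat.zero_le n) (le_max_right m n),
          Finset.sum_eq_zero h2, add_zero, ← Finset.range_eq_Ico]

lemma dlt_pred_eq_des (n : ℕ) (π : Equiv.Perm (Fin n)) (hn : 1 ≤ n) :
    dlt n π (n - 1) = des n π := by
  obtain ⟨N, rfl⟩ : ∃ N, n = N + 1 := ⟨n - 1, by omega⟩
  rw [des_eq, dlt, Finset.sum_range_succ, dchar_eq_zero π (by omega), add_zero,
    Nat.add_sub_cancel]

lemma sum_dlt (n : ℕ) (π : Equiv.Perm (Fin n)) (N : ℕ) :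
    ∑ m ∈ Finset.range N, dlt n π m = ∑ l ∈ Finset.range N, (N - 1 - l) * dchar n π l := by
  induction N with
  | zero => simp
  | succ N ih =>
    rw [Finset.sum_range_succ, ih, Finset.sum_range_succ,
      show (N + 1 - 1 - N) * dchar n π N = 0 by simp, add_zero, dlt,
      ← Finset.sum_add_distrib]
    refine Finset.sum_congr rfl fun l hl => ?_
    have hlN := Finset.mem_range.1 hl
    rw [show N + 1 - 1 - l = (N - 1 - l) + 1 by omega, add_mul, one_mul]

lemma sum_dlt_fin (n : ℕ) (π : Equiv.Perm (Fin n)) :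
    ∑ i : Fin n, dlt n π (i : ℕ) = dcomaj n π := by
  rw [Fin.sum_univ_eq_sum_range (fun m => dlt n π m) n, sum_dlt, dcomaj]

lemma dchar_zero_lt {n : ℕ} (π : Equiv.Perm (Fin n)) {l : ℕ} (h : l + 1 < n)
    (h0 : dchar n π l = 0) : π ⟨l, Nat.lt_of_succ_lt h⟩ < π ⟨l + 1, h⟩ := by
  unfold dchar at h0
  rw [dif_pos h] at h0
  have hle : ¬ π ⟨l + 1, h⟩ < π ⟨l, Nat.lt_of_succ_lt h⟩ := by
    intro hc; rw [if_pos hc] at h0; exact one_ne_zero h0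
  have hne : π ⟨l, Nat.lt_of_succ_lt h⟩ ≠ π ⟨l + 1, h⟩ := by
    intro he
    have := π.injective he
    simp [Fin.ext_iff] at this
  exact lt_of_le_of_ne (le_of_not_gt hle) hne

lemma chain_lt {n : ℕ} (π : Equiv.Perm (Fin n)) {i j : Fin n} (hij : i < j)
    (h0 : ∀ l, (i : ℕ) ≤ l → l < (j : ℕ) → dchar n π l = 0) : π i < π j := by
  suffices H : ∀ m (hm : m ≤ (j : ℕ)), (i : ℕ) < m → π i < π ⟨m, lt_of_le_of_lt hm j.isLt⟩ by
    have h := H (j : ℕ) le_rfl hij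
    simpa using h
  intro m
  induction m with
  | zero => intro _ h; omega
  | succ m ih =>
    intro hm him
    have hm1 : m + 1 < n := lt_of_le_of_lt hm j.isLt
    rcases Nat.lt_or_ge (i : ℕ) m with h' | h'
    · exact lt_trans (ih (le_trans (Nat.le_succ m) hm) h')
        (dchar_zero_lt π hm1 (h0 m (le_of_lt h') (by omega)))
    · have hieq : (i : ℕ) = m := by omega
      have hstep := dchar_zero_lt π hm1 (h0 m (by omega) (by omega))
      have : i = ⟨m, Nat.lt_of_succ_lt hm1⟩ := Fin.ext hieq
      rw [this]
      exact hstep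

lemma mem_M {n m : ℕ} {b : Fin n → ℕ} :
    b ∈ M n m ↔ (∀ i, b i ≤ m) ∧ Monotone b := by
  simp only [M, Finset.mem_filter, Fintype.mem_piFinset, Finset.mem_range, Nat.lt_succ_iff]

lemma g_zero (n : ℕ) : g n 0 = 1 := by
  rw [g]
  have hM : M n 0 = {fun _ => 0} := by
    ext b
    simp only [mem_M, Finset.mem_singleton, Nat.le_zero, funext_iff]
    constructor
    · rintro ⟨h1, _⟩; exact h1
    · intro h; exact ⟨h, fun i j _ => by rw [h i, h j]⟩
  rw [hM, Finset.sum_singleton]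
  simp

lemma g_left_zero (m : ℕ) : g 0 m = 1 := by
  rw [g]
  have hM : M 0 m = {fun i => i.elim0} := by
    ext b
    simp only [mem_M, Finset.mem_singleton]
    constructor
    · intro _; funext i; exact i.elim0
    · intro h; exact ⟨fun i => i.elim0, fun i => i.elim0⟩
  rw [hM, Finset.sum_singleton]
  simp

lemma g_rec (n m : ℕ) : g (n + 1) (m + 1) = g n (m + 1) + X ^ (n + 1) * g (n + 1) m := by
  rw [g, ← Finset.sum_filter_add_sum_filter_not (M (n + 1) (m + 1)) (fun b => b 0 = 0)]
  congr 1
  · -- tuples with first entry 0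
    rw [g]
    refine Finset.sum_nbij' (fun b => b ∘ Fin.succ) (fun c => Fin.cons 0 c) ?_ ?_ ?_ ?_ ?_
    · intro b hb
      rw [Finset.mem_filter, mem_M] at hb
      exact mem_M.2 ⟨fun i => hb.1.1 _, hb.1.2.comp Fin.strictMono_succ.monotone⟩
    · intro c hc
      rw [mem_M] at hc
      rw [Finset.mem_filter, mem_M]
      refine ⟨⟨fun i => ?_, ?_⟩, by simp⟩
      · refine Fin.cases ?_ (fun j => ?_) i
        · simp
        · simpa using hc.1 j
      · intro i j hij
        rcases Fin.eq_zero_or_eq_succ i with rfl | ⟨i', rfl⟩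
        · rw [Fin.cons_zero]
          exact Nat.zero_le _
        · rcases Fin.eq_zero_or_eq_succ j with rfl | ⟨j', rfl⟩
          · exact absurd (le_antisymm hij (Fin.zero_le _)) (Fin.succ_ne_zero i')
          · simp only [Fin.cons_succ]
            exact hc.2 (Fin.succ_le_succ_iff.1 hij)
    · intro b hb
      rw [Finset.mem_filter] at hb
      funext i
      refine Fin.cases ?_ (fun j => ?_) i
      · simpa using hb.2.symm
      · simp
    · intro c _
      funext i
      simp
    · intro b hb
      rw [Finset.mem_filter] at hb
      rw [Fin.sum_univ_succ, hb.2, zero_add]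
      rfl
  · -- tuples with positive first entry
    rw [g, Finset.mul_sum]
    have hpos : ∀ b ∈ (M (n + 1) (m + 1)).filter (fun b => ¬ b 0 = 0), ∀ i, 1 ≤ b i := by
      intro b hb i
      rw [Finset.mem_filter, mem_M] at hb
      have := hb.1.2 (Fin.zero_le i)
      omega
    refine Finset.sum_nbij' (fun b i => b i - 1) (fun c i => c i + 1) ?_ ?_ ?_ ?_ ?_
    · intro b hb
      have h1 := hpos b hb
      rw [Finset.mem_filter, mem_M] at hb
      refine mem_M.2 ⟨fun i => ?_, fun i j hij => ?_⟩
      · show b i - 1 ≤ m; have := hb.1.1 i; omega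
      · show b i - 1 ≤ b j - 1; have := hb.1.2 hij; omega
    · intro c hc
      rw [mem_M] at hc
      rw [Finset.mem_filter, mem_M]
      dsimp only
      exact ⟨⟨fun i => by show c i + 1 ≤ m + 1; have := hc.1 i; omega,
        fun i j hij => by show c i + 1 ≤ c j + 1; have := hc.2 hij; omega⟩,
        by show ¬ c 0 + 1 = 0; omega⟩
    · intro b hb
      have h1 := hpos b hb
      funext i
      dsimp only
      have := h1 i
      omega
    · intro c _
      funext i
      dsimp only
      omega
    · intro b hb
      have h1 := hpos b hb
      dsimp only
      have hsum : ∑ i, b i = (∑ i, (b i - 1)) + (n + 1) := by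
        have : ∀ i ∈ Finset.univ, b i = (b i - 1) + 1 := fun i _ => by have := h1 i; omega
        rw [Finset.sum_congr rfl this, Finset.sum_add_distrib]
        simp
      rw [hsum, pow_add]
      ring

lemma step_mk (n : ℕ) :
    (1 - PowerSeries.C (R := Polynomial ℚ) (Polynomial.X ^ (n + 1)) * PowerSeries.X) *
      PowerSeries.mk (g (n + 1)) = PowerSeries.mk (g n) := by
  ext k
  rw [sub_mul, one_mul, map_sub, PowerSeries.coeff_mk, mul_assoc, PowerSeries.coeff_C_mul,
    PowerSeries.coeff_mk]
  cases k with
  | zero =>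
    rw [PowerSeries.coeff_zero_X_mul, mul_zero, sub_zero, g_zero, g_zero]
  | succ m =>
    rw [PowerSeries.coeff_succ_X_mul, PowerSeries.coeff_mk, g_rec]
    ring

lemma base_mk : (1 - (PowerSeries.X : PowerSeries (Polynomial ℚ))) * PowerSeries.mk (g 0) = 1 := by
  ext k
  rw [sub_mul, one_mul, map_sub, PowerSeries.coeff_mk]
  cases k with
  | zero =>
    rw [PowerSeries.coeff_zero_X_mul, sub_zero, g_left_zero, PowerSeries.coeff_zero_one]
  | succ m =>
    rw [PowerSeries.coeff_succ_X_mul, PowerSeries.coeff_mk, g_left_zero, g_left_zero,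
      PowerSeries.coeff_one, if_neg (Nat.succ_ne_zero m), sub_self]

lemma prod_mul_mk_g (n : ℕ) :
    (∏ j ∈ Finset.range (n + 1),
        (1 - PowerSeries.C (R := Polynomial ℚ) (Polynomial.X ^ j) * PowerSeries.X)) *
      PowerSeries.mk (g n) = 1 := by
  induction n with
  | zero =>
    rw [Finset.prod_range_one, pow_zero, map_one]
    simpa using base_mk
  | succ n ih =>
    rw [Finset.prod_range_succ, mul_assoc, step_mk, ih]

lemma sort_key {n : ℕ} (w : Fin n → ℕ) {m1 m2 : ℕ} (h12 : m1 ≤ m2) (h2 : m2 < n) :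
    w (Tuple.sort w ⟨m1, lt_of_le_of_lt h12 h2⟩) + dlt n (Tuple.sort w) m2
      ≤ w (Tuple.sort w ⟨m2, h2⟩) + dlt n (Tuple.sort w) m1 := by
  have hsort := (Tuple.eq_sort_iff (f := w) (σ := Tuple.sort w)).mp rfl
  obtain ⟨hmono, hstab⟩ := hsort
  revert h2
  induction m2, h12 using Nat.le_induction with
  | base => intro h2; exact le_refl _
  | succ m2 hm2 ih =>
    intro h2
    have hm2n : m2 < n := Nat.lt_of_succ_lt h2
    have hih := ih hm2n
    rw [dlt_succ]
    have hmle : w (Tuple.sort w ⟨m2, hm2n⟩) ≤ w (Tuple.sort w ⟨m2 + 1, h2⟩) :=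
      hmono (by simp [Fin.mk_le_mk])
    by_cases hd : dchar n (Tuple.sort w) m2 = 0
    · rw [hd, add_zero]
      have : w (Tuple.sort w ⟨m1, lt_of_le_of_lt hm2 hm2n⟩)
          = w (Tuple.sort w ⟨m1, lt_of_le_of_lt (Nat.le_succ_of_le hm2) h2⟩) := rfl
      omega
    · -- descent at m2 : strict increase
      have hdesc : Tuple.sort w ⟨m2 + 1, h2⟩ < Tuple.sort w ⟨m2, hm2n⟩ := by
        unfold dchar at hd
        rw [dif_pos h2] at hd
        by_contra hc
        rw [if_neg (by simpa using hc)] at hd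
        exact hd rfl
      have hstrict : w (Tuple.sort w ⟨m2, hm2n⟩) < w (Tuple.sort w ⟨m2 + 1, h2⟩) := by
        rcases lt_or_eq_of_le hmle with h | h
        · exact h
        · exfalso
          have := hstab ⟨m2, hm2n⟩ ⟨m2 + 1, h2⟩ (by simp [Fin.mk_lt_mk]) h
          exact absurd hdesc (asymm this)
      have hd1 : dchar n (Tuple.sort w) m2 ≤ 1 := by
        unfold dchar
        split_ifs <;> omega
      have : w (Tuple.sort w ⟨m1, lt_of_le_of_lt hm2 hm2n⟩)
          = w (Tuple.sort w ⟨m1, lt_of_le_of_lt (Nat.le_succ_of_le hm2) h2⟩) := rfl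
      omega

lemma dlt_le_w {n : ℕ} (w : Fin n → ℕ) {m : ℕ} (hm : m < n) :
    dlt n (Tuple.sort w) m ≤ w (Tuple.sort w ⟨m, hm⟩) := by
  have h := sort_key w (Nat.zero_le m) hm
  have h0 : dlt n (Tuple.sort w) 0 = 0 := by simp [dlt]
  omega

lemma key (n k : ℕ) (hn : 1 ≤ n) :
    (∑ i ∈ Finset.range (k + 1), (Polynomial.X : Polynomial ℚ) ^ i) ^ n
      = ∑ π : Equiv.Perm (Fin n),
          (if des n π ≤ k then Polynomial.X ^ dcomaj n π * g n (k - des n π) else 0) := by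
  have hrhs : ∀ π : Equiv.Perm (Fin n),
      (if des n π ≤ k then (Polynomial.X : Polynomial ℚ) ^ dcomaj n π * g n (k - des n π) else 0)
        = ∑ b ∈ (if des n π ≤ k then M n (k - des n π) else (∅ : Finset (Fin n → ℕ))),
            Polynomial.X ^ (dcomaj n π + ∑ i, b i) := by
    intro π
    split_ifs with h
    · rw [g, Finset.mul_sum]
      exact Finset.sum_congr rfl fun b _ => (pow_add _ _ _).symm
    · simp
  rw [Finset.sum_congr rfl fun π _ => hrhs π, Finset.sum_sigma', Finset.sum_pow']
  refine Finset.sum_nbij'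
    (fun w => ⟨Tuple.sort w, fun idx => w (Tuple.sort w idx) - dlt n (Tuple.sort w) (idx : ℕ)⟩)
    (fun p x => p.2 ((p.1)⁻¹ x) + dlt n p.1 (((p.1)⁻¹ x : Fin n) : ℕ)) ?_ ?_ ?_ ?_ ?_
  · -- forward map lands in the sigma set
    intro w hw
    rw [Fintype.mem_piFinset] at hw
    have hwk : ∀ x, w x ≤ k := fun x => Nat.lt_succ_iff.1 (Finset.mem_range.1 (hw x))
    have hlast : n - 1 < n := by omega
    have hdes : des n (Tuple.sort w) ≤ w (Tuple.sort w ⟨n - 1, hlast⟩) := by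
      rw [← dlt_pred_eq_des n (Tuple.sort w) hn]
      exact dlt_le_w w hlast
    have hdk : des n (Tuple.sort w) ≤ k := le_trans hdes (hwk _)
    rw [Finset.mem_sigma]
    refine ⟨Finset.mem_univ _, ?_⟩
    dsimp only
    rw [if_pos hdk]
    have hbmono : Monotone (fun idx : Fin n =>
        w (Tuple.sort w idx) - dlt n (Tuple.sort w) (idx : ℕ)) := by
      intro i j hij
      have hk2 := sort_key w (Fin.le_def.1 hij) j.isLt
      have h1 := dlt_le_w w i.isLt
      have h2 := dlt_le_w w j.isLt
      simp only [Fin.eta] at hk2 h1 h2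
      dsimp only
      omega
    refine mem_M.2 ⟨fun i => ?_, hbmono⟩
    have hble := hbmono (show i ≤ ⟨n - 1, hlast⟩ from Fin.mk_le_mk.2 (by omega) |>.trans_eq' rfl)
    have hlastb : w (Tuple.sort w ⟨n - 1, hlast⟩) - dlt n (Tuple.sort w) (n - 1)
        ≤ k - des n (Tuple.sort w) := by
      rw [dlt_pred_eq_des n (Tuple.sort w) hn]
      exact Nat.sub_le_sub_right (hwk _) _
    dsimp only at hble
    omega
  · -- backward map lands in the product set
    rintro ⟨π, b⟩ hp
    dsimp only
    rw [Finset.mem_sigma] at hp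
    obtain ⟨-, hb⟩ := hp
    by_cases hdk : des n π ≤ k
    swap
    · rw [if_neg hdk] at hb; exact absurd hb (Finset.notMem_empty _)
    rw [if_pos hdk, mem_M] at hb
    dsimp only at hb
    rw [Fintype.mem_piFinset]
    intro x
    rw [Finset.mem_range, Nat.lt_succ_iff]
    have h1 := hb.1 (π⁻¹ x)
    have h2 := dlt_le_des n π ((π⁻¹ x : Fin n) : ℕ)
    omega
  · -- left inverse
    intro w _
    funext x
    dsimp only
    have hd := dlt_le_w w ((Tuple.sort w)⁻¹ x).isLt
    simp only [Fin.eta] at hd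
    rw [Nat.sub_add_cancel hd, Equiv.Perm.coe_inv, Equiv.apply_symm_apply]
  · -- right inverse
    rintro ⟨π, b⟩ hp
    rw [Finset.mem_sigma] at hp
    obtain ⟨-, hb⟩ := hp
    by_cases hdk : des n π ≤ k
    swap
    · rw [if_neg hdk] at hb; exact absurd hb (Finset.notMem_empty _)
    rw [if_pos hdk, mem_M] at hb
    dsimp only at hb ⊢
    have hsort : Tuple.sort (fun x => b (π⁻¹ x) + dlt n π ((π⁻¹ x : Fin n) : ℕ)) = π := by
      symm
      rw [Tuple.eq_sort_iff]
      constructor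
      · intro i j hij
        simp only [Function.comp_apply, Equiv.Perm.coe_inv, Equiv.symm_apply_apply]
        exact Nat.add_le_add (hb.2 hij) (dlt_mono n π (Fin.le_def.1 hij))
      · intro i j hij heq
        simp only [Equiv.Perm.coe_inv, Equiv.symm_apply_apply] at heq
        have h1 : b i ≤ b j := hb.2 (le_of_lt hij)
        have h2 : dlt n π (i : ℕ) ≤ dlt n π (j : ℕ) :=
          dlt_mono n π (le_of_lt (Fin.lt_def.1 hij))
        have hdlt : dlt n π (i : ℕ) = dlt n π (j : ℕ) := by omega
        refine chain_lt π hij ?_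
        intro l hil hlj
        have ha := dlt_mono n π hil
        have hb2 := dlt_mono n π (show l + 1 ≤ (j : ℕ) from hlj)
        have hs := dlt_succ n π l
        omega
    have hfun : (fun idx => (fun x => b (π⁻¹ x) + dlt n π ((π⁻¹ x : Fin n) : ℕ)) (π idx)
        - dlt n π (idx : ℕ)) = b := by
      funext idx
      simp only [Equiv.Perm.coe_inv, Equiv.symm_apply_apply]
      omega
    rw [hsort, hfun]
  · -- weights agree
    intro w _
    dsimp only
    rw [Finset.prod_pow_eq_pow_sum]
    congr 1
    have hcomp : ∑ i : Fin n, w (Tuple.sort w i) = ∑ x, w x := Equiv.sum_comp _ _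
    rw [← hcomp, ← sum_dlt_fin n (Tuple.sort w), ← Finset.sum_add_distrib]
    refine Finset.sum_congr rfl fun i _ => ?_
    have hd := dlt_le_w w i.isLt
    simp only [Fin.eta] at hd
    omega

lemma dchar_conj {n : ℕ} (π : Equiv.Perm (Fin n)) {l : ℕ} (hl : l + 1 < n) :
    dchar n (Fin.revPerm * π * Fin.revPerm) l = dchar n π (n - 2 - l) := by
  have h2 : (n - 2 - l) + 1 < n := by omega
  unfold dchar
  rw [dif_pos hl, dif_pos h2]
  simp only [Equiv.Perm.mul_apply, Fin.revPerm_apply]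
  have e1 : Fin.rev (⟨l, Nat.lt_of_succ_lt hl⟩ : Fin n) = ⟨n - 2 - l + 1, h2⟩ := by
    ext
    simp only [Fin.val_rev, Fin.val_mk]
    omega
  have e2 : Fin.rev (⟨l + 1, hl⟩ : Fin n) = ⟨n - 2 - l, Nat.lt_of_succ_lt h2⟩ := by
    ext
    simp only [Fin.val_rev, Fin.val_mk]
    omega
  simp only [e1, e2, Fin.rev_lt_rev]

lemma des_conj {n : ℕ} (hn : 1 ≤ n) (π : Equiv.Perm (Fin n)) :
    des n (Fin.revPerm * π * Fin.revPerm) = des n π := by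
  obtain ⟨N, rfl⟩ : ∃ N, n = N + 1 := ⟨n - 1, by omega⟩
  rw [des_eq, des_eq, Finset.sum_range_succ, Finset.sum_range_succ,
    dchar_eq_zero _ (by omega), dchar_eq_zero _ (by omega), add_zero, add_zero,
    ← Finset.sum_range_reflect]
  refine Finset.sum_congr rfl fun l hl => ?_
  have hlN := Finset.mem_range.1 hl
  rw [dchar_conj π (by omega)]
  congr 1
  omega

lemma maj_conj {n : ℕ} (hn : 1 ≤ n) (π : Equiv.Perm (Fin n)) :
    maj n (Fin.revPerm * π * Fin.revPerm) = dcomaj n π := by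
  obtain ⟨N, rfl⟩ : ∃ N, n = N + 1 := ⟨n - 1, by omega⟩
  rw [maj_eq, dcomaj, Finset.sum_range_succ, Finset.sum_range_succ,
    dchar_eq_zero _ (by omega), dchar_eq_zero (π := π) (by omega), mul_zero, mul_zero,
    add_zero, add_zero, ← Finset.sum_range_reflect]
  refine Finset.sum_congr rfl fun l hl => ?_
  have hlN := Finset.mem_range.1 hl
  rw [dchar_conj π (by omega)]
  have h1 : N - 1 - l + 1 = N + 1 - 1 - l := by omega
  have h2 : N + 1 - 2 - (N - 1 - l) = l := by omega
  rw [h1, h2]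

lemma hsym (n : ℕ) (hn : 1 ≤ n) :
    ∑ π : Equiv.Perm (Fin n),
        PowerSeries.C (R := Polynomial ℚ) (Polynomial.X ^ maj n π) * PowerSeries.X ^ des n π
      = ∑ π : Equiv.Perm (Fin n),
        PowerSeries.C (R := Polynomial ℚ) (Polynomial.X ^ dcomaj n π) * PowerSeries.X ^ des n π := by
  refine Fintype.sum_equiv ((Equiv.mulRight Fin.revPerm).trans (Equiv.mulLeft Fin.revPerm)) _ _ ?_
  intro π
  have hE : ((Equiv.mulRight Fin.revPerm).trans (Equiv.mulLeft Fin.revPerm)) π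
      = Fin.revPerm * π * Fin.revPerm := by
    simp [Equiv.trans_apply, mul_assoc]
  have hee : Fin.revPerm * (Fin.revPerm * π * Fin.revPerm) * Fin.revPerm = π :=
    Equiv.ext fun x => by simp [Equiv.Perm.mul_apply]
  have hmaj := maj_conj hn (Fin.revPerm * π * Fin.revPerm)
  rw [hee] at hmaj
  rw [hE, des_conj hn, ← hmaj]

end CarlitzAux

/-- Carlitz's Euler–Mahonian identity:
`∑_{k≥0} [k+1]_q^n t^k = (∑_{π ∈ S_n} t^{des π} q^{maj π}) / ∏_{j=0}^n (1 - t q^j)`,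
as formal power series in `t` with polynomial coefficients in `q`. -/
theorem stmt1 (n : ℕ) (hn : 1 ≤ n) :
    (PowerSeries.mk fun k => (∑ i ∈ Finset.range (k + 1), (Polynomial.X : Polynomial ℚ) ^ i) ^ n) *
        ∏ j ∈ Finset.range (n + 1),
          (1 - PowerSeries.C (R := Polynomial ℚ) (Polynomial.X ^ j) * PowerSeries.X)
      = ∑ π : Equiv.Perm (Fin n),
          PowerSeries.C (R := Polynomial ℚ) (Polynomial.X ^ maj n π) * PowerSeries.X ^ des n π := by
  have hunit := prod_mul_mk_g n
  have hmain : (PowerSeries.mk fun k =>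
        (∑ i ∈ Finset.range (k + 1), (Polynomial.X : Polynomial ℚ) ^ i) ^ n)
      = (∑ π : Equiv.Perm (Fin n),
          PowerSeries.C (R := Polynomial ℚ) (Polynomial.X ^ maj n π) * PowerSeries.X ^ des n π) *
        PowerSeries.mk (g n) := by
    rw [hsym n hn]
    refine PowerSeries.ext fun k => ?_
    rw [PowerSeries.coeff_mk, Finset.sum_mul,
      map_sum (PowerSeries.coeff (R := Polynomial ℚ) k) _ Finset.univ, key n k hn]
    refine Fintype.sum_congr _ _ fun π => ?_
    rw [mul_assoc, PowerSeries.coeff_C_mul, PowerSeries.coeff_X_pow_mul', PowerSeries.coeff_mk,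
      mul_ite, mul_zero]
  rw [hmain, mul_assoc, mul_comm (PowerSeries.mk (g n))
    (∏ j ∈ Finset.range (n + 1),
      (1 - PowerSeries.C (R := Polynomial ℚ) (Polynomial.X ^ j) * PowerSeries.X)), hunit, mul_one]
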